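/- Fix integers N ≥ L ≥ 1, ρ > 0 and α_1,…,α_L > 0. Define R_0(n | ñ; τ) = (Σ_ℓ α_ℓ^2 τ_ℓ n_ℓ^{−ρ}) / (Σ_ℓ α_ℓ^2 τ_ℓ ñ_ℓ^{−ρ}). Then min_{n ∈ Δ_N} max_{ñ ∈ Δ_N} sup_{τ ∈ T} R_0(n | ñ; τ) = ((N − L + 1)/⌊N/L⌋)^{ρ}, and the minimum is attained by the near-equal allocation n* having r = N − L⌊N/L⌋ coordinates equal to ⌊N/L⌋ + 1 and the remaining coordinates equal to ⌊N/L⌋. -/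

import Mathlib

open Real

/-- Feasible integer sample-size allocations of a total budget `N` to `L` strata. -/
def Delta (L N : ℕ) : Set (Fin L → ℕ) :=
  { nv | (∀ ℓ, 1 ≤ nv ℓ) ∧ ∑ ℓ, nv ℓ = N }

/-- The suboptimality ratio `R₀(n ∣ ñ; τ)` under the uncorrelated (ansatz 0)
variance when stratum `ℓ` has variance `τ_ℓ n_ℓ^{-ρ}`. -/
noncomputable def R0 {L : ℕ} (α : Fin L → ℝ) (ρ : ℝ)
    (nv ntv : Fin L → ℕ) (τ : Fin L → ℝ) : ℝ :=
  (∑ ℓ, (α ℓ) ^ 2 * τ ℓ * ((nv ℓ : ℝ)) ^ (-ρ)) /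
  (∑ ℓ, (α ℓ) ^ 2 * τ ℓ * ((ntv ℓ : ℝ)) ^ (-ρ))

/-- `sup_{τ ∈ T} R₀(n ∣ ñ; τ)`. -/
noncomputable def supTau0 {L : ℕ} (α : Fin L → ℝ) (ρ : ℝ) (nv ntv : Fin L → ℕ) : ℝ :=
  sSup { r : ℝ | ∃ τ : Fin L → ℝ, (∀ ℓ, 0 ≤ τ ℓ) ∧ (∃ ℓ, 0 < τ ℓ) ∧ r = R0 α ρ nv ntv τ }

/-- `max_{ñ ∈ Δ_N} sup_{τ ∈ T} R₀(n ∣ ñ; τ)`. -/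
noncomputable def worst0 {L : ℕ} (N : ℕ) (α : Fin L → ℝ) (ρ : ℝ) (nv : Fin L → ℕ) : ℝ :=
  sSup { w : ℝ | ∃ ntv ∈ Delta L N, w = supTau0 α ρ nv ntv }

lemma rpow_div_key (ρ : ℝ) {a b : ℝ} (ha : 0 < a) (hb : 0 < b) :
    a ^ (-ρ) = (b / a) ^ ρ * b ^ (-ρ) := by
  rw [Real.div_rpow hb.le ha.le, Real.rpow_neg hb.le, Real.rpow_neg ha.le]
  have h1 := (Real.rpow_pos_of_pos ha ρ).ne'
  have h2 := (Real.rpow_pos_of_pos hb ρ).ne'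
  field_simp

lemma supTau0_isGreatest {L : ℕ} [Nonempty (Fin L)] (α : Fin L → ℝ) (hα : ∀ ℓ, 0 < α ℓ)
    {ρ : ℝ} (nv ntv : Fin L → ℕ) (hnv : ∀ ℓ, 1 ≤ nv ℓ) (hntv : ∀ ℓ, 1 ≤ ntv ℓ) :
    IsGreatest { r : ℝ | ∃ τ : Fin L → ℝ, (∀ ℓ, 0 ≤ τ ℓ) ∧ (∃ ℓ, 0 < τ ℓ) ∧ r = R0 α ρ nv ntv τ }
      (Finset.univ.sup' Finset.univ_nonempty fun ℓ => ((ntv ℓ : ℝ) / (nv ℓ : ℝ)) ^ ρ) := by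
  have hnvp : ∀ ℓ, (0:ℝ) < nv ℓ := fun ℓ => by exact_mod_cast hnv ℓ
  have hntvp : ∀ ℓ, (0:ℝ) < ntv ℓ := fun ℓ => by exact_mod_cast hntv ℓ
  set f : Fin L → ℝ := fun ℓ => ((ntv ℓ : ℝ) / (nv ℓ : ℝ)) ^ ρ with hf
  have hkey : ∀ ℓ, ((nv ℓ : ℝ)) ^ (-ρ) = f ℓ * ((ntv ℓ : ℝ)) ^ (-ρ) :=
    fun ℓ => rpow_div_key ρ (hnvp ℓ) (hntvp ℓ)
  constructor
  · -- membership: indicator at argmax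
    obtain ⟨ℓ₀, -, hℓ₀⟩ := Finset.exists_mem_eq_sup' Finset.univ_nonempty f
    refine ⟨fun ℓ => if ℓ = ℓ₀ then 1 else 0, fun ℓ => by positivity,
      ⟨ℓ₀, by simp⟩, ?_⟩
    have hsum : ∀ g : Fin L → ℝ,
        (∑ ℓ, (α ℓ)^2 * (if ℓ = ℓ₀ then (1:ℝ) else 0) * g ℓ) = (α ℓ₀)^2 * g ℓ₀ := by
      intro g
      rw [Finset.sum_eq_single ℓ₀]
      · simp
      · intro b _ hb; simp [hb]
      · simp
    rw [R0, hsum, hsum, hℓ₀, hkey ℓ₀]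
    have h1 : (α ℓ₀)^2 ≠ 0 := pow_ne_zero 2 (hα ℓ₀).ne'
    have h2 : ((ntv ℓ₀ : ℝ)) ^ (-ρ) ≠ 0 := (Real.rpow_pos_of_pos (hntvp ℓ₀) _).ne'
    field_simp
    field_simp [(hα ℓ₀).ne']
  · -- upper bound
    rintro r ⟨τ, hτ0, ⟨ℓ₁, hℓ₁⟩, rfl⟩
    set M := Finset.univ.sup' Finset.univ_nonempty f with hM
    have hMf : ∀ ℓ, f ℓ ≤ M := fun ℓ => Finset.le_sup' f (Finset.mem_univ ℓ)
    have hden : 0 < ∑ ℓ, (α ℓ)^2 * τ ℓ * ((ntv ℓ : ℝ)) ^ (-ρ) := by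
      apply Finset.sum_pos' (fun ℓ _ => by
        have := hτ0 ℓ
        have := (Real.rpow_pos_of_pos (hntvp ℓ) (-ρ)).le
        positivity)
      exact ⟨ℓ₁, Finset.mem_univ _, by
        have h1 := Real.rpow_pos_of_pos (hntvp ℓ₁) (-ρ)
        have h2 := hα ℓ₁
        positivity⟩
    rw [R0, div_le_iff₀ hden]
    calc ∑ ℓ, (α ℓ)^2 * τ ℓ * ((nv ℓ : ℝ)) ^ (-ρ)
        ≤ ∑ ℓ, M * ((α ℓ)^2 * τ ℓ * ((ntv ℓ : ℝ)) ^ (-ρ)) := by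
          apply Finset.sum_le_sum
          intro ℓ _
          rw [hkey ℓ]
          have h1 : 0 ≤ (α ℓ)^2 * τ ℓ * ((ntv ℓ : ℝ)) ^ (-ρ) := by
            have := hτ0 ℓ
            have := (Real.rpow_pos_of_pos (hntvp ℓ) (-ρ)).le
            positivity
          calc (α ℓ)^2 * τ ℓ * (f ℓ * ((ntv ℓ : ℝ)) ^ (-ρ))
              = f ℓ * ((α ℓ)^2 * τ ℓ * ((ntv ℓ : ℝ)) ^ (-ρ)) := by ring
            _ ≤ M * ((α ℓ)^2 * τ ℓ * ((ntv ℓ : ℝ)) ^ (-ρ)) := by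
                apply mul_le_mul_of_nonneg_right (hMf ℓ) h1
      _ = M * ∑ ℓ, (α ℓ)^2 * τ ℓ * ((ntv ℓ : ℝ)) ^ (-ρ) := by rw [Finset.mul_sum]

lemma entry_le {L N : ℕ} {ntv : Fin L → ℕ} (h : ntv ∈ Delta L N) (ℓ : Fin L) :
    ntv ℓ + (L - 1) ≤ N := by
  obtain ⟨h1, h2⟩ := h
  have hs := Finset.add_sum_erase Finset.univ ntv (Finset.mem_univ ℓ)
  have hcard : (Finset.univ.erase ℓ).card = L - 1 := by
    rw [Finset.card_erase_of_mem (Finset.mem_univ ℓ), Finset.card_univ, Fintype.card_fin]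
  have hge : (Finset.univ.erase ℓ).card • 1 ≤ ∑ j ∈ Finset.univ.erase ℓ, ntv j :=
    Finset.card_nsmul_le_sum _ _ _ (fun j _ => h1 j)
  rw [smul_eq_mul, mul_one, hcard] at hge
  omega

lemma inf'_le_slack {L N : ℕ} [Nonempty (Fin L)] {nv : Fin L → ℕ} (h : nv ∈ Delta L N) :
    Finset.univ.inf' Finset.univ_nonempty nv + (L - 1) ≤ N := by
  obtain ⟨ℓ₀, -, hℓ₀⟩ := Finset.exists_mem_eq_inf' (Finset.univ_nonempty (α := Fin L)) nv
  have := entry_le h ℓ₀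
  omega

lemma worst0_isGreatest {L N : ℕ} [Nonempty (Fin L)] (hLN : L ≤ N)
    (α : Fin L → ℝ) (hα : ∀ ℓ, 0 < α ℓ) {ρ : ℝ} (hρ : 0 < ρ)
    {nv : Fin L → ℕ} (hnv : nv ∈ Delta L N) :
    IsGreatest { w : ℝ | ∃ ntv ∈ Delta L N, w = supTau0 α ρ nv ntv }
      (((((N - L + 1 : ℕ) : ℝ)) /
        ((Finset.univ.inf' Finset.univ_nonempty nv : ℕ) : ℝ)) ^ ρ) := by
  set m : ℕ := Finset.univ.inf' Finset.univ_nonempty nv with hm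
  have hm1 : 1 ≤ m := Finset.le_inf' _ _ (fun ℓ _ => hnv.1 ℓ)
  have hmN : m + (L - 1) ≤ N := inf'_le_slack hnv
  have hL : 0 < L := Fin.pos_iff_nonempty.mpr ‹_›
  have hmle : m ≤ N - L + 1 := by omega
  have hmlt : (0:ℝ) < (m:ℝ) := by exact_mod_cast hm1
  have htop : (0:ℝ) < ((N - L + 1 : ℕ) : ℝ) := by
    have : 1 ≤ N - L + 1 := by omega
    exact_mod_cast this
  have hmv : ∀ ℓ, m ≤ nv ℓ := fun ℓ => Finset.inf'_le nv (Finset.mem_univ ℓ)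
  constructor
  · -- attained by concentrating the budget on an argmin stratum
    obtain ⟨ℓ₀, -, hℓ₀⟩ := Finset.exists_mem_eq_inf' (Finset.univ_nonempty (α := Fin L)) nv
    set ntv : Fin L → ℕ := fun ℓ => (if ℓ = ℓ₀ then N - L else 0) + 1 with hntv
    have hntvD : ntv ∈ Delta L N := by
      constructor
      · intro ℓ; simp [hntv]
      · rw [hntv]
        simp only [Finset.sum_add_distrib, Finset.sum_ite_eq', Finset.mem_univ, if_true,
          Finset.sum_const, Finset.card_univ, Fintype.card_fin, smul_eq_mul, mul_one]
        omega
    refine ⟨ntv, hntvD, ?_⟩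
    rw [supTau0, (supTau0_isGreatest α hα nv ntv hnv.1 hntvD.1).csSup_eq]
    apply le_antisymm
    · have := Finset.le_sup' (fun ℓ => ((ntv ℓ : ℝ) / (nv ℓ : ℝ)) ^ ρ) (Finset.mem_univ ℓ₀)
      refine le_trans (le_of_eq ?_) this
      have h1 : ((ntv ℓ₀ : ℝ)) = ((N - L + 1 : ℕ) : ℝ) := by
        simp [hntv]
      rw [h1, ← hℓ₀, ← hm]
    · apply Finset.sup'_le
      intro ℓ _
      by_cases hcase : ℓ = ℓ₀
      · subst hcase
        have h1 : ((ntv ℓ : ℝ)) = ((N - L + 1 : ℕ) : ℝ) := by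
          simp [hntv]
        rw [h1, ← hℓ₀, ← hm]
      · have h1 : ((ntv ℓ : ℝ)) = 1 := by simp [hntv, hcase]
        rw [h1]
        apply Real.rpow_le_rpow (by positivity) _ hρ.le
        have hnvℓ : (1:ℝ) ≤ (nv ℓ : ℝ) := by exact_mod_cast hnv.1 ℓ
        calc (1:ℝ) / (nv ℓ : ℝ) ≤ 1 := by
              rw [div_le_one (by linarith)]; exact hnvℓ
          _ ≤ ((N - L + 1 : ℕ) : ℝ) / (m : ℝ) := by
              rw [le_div_iff₀ hmlt, one_mul]; exact_mod_cast hmle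
  · rintro w ⟨ntv, hntvD, rfl⟩
    rw [supTau0, (supTau0_isGreatest α hα nv ntv hnv.1 hntvD.1).csSup_eq]
    apply Finset.sup'_le
    intro ℓ _
    apply Real.rpow_le_rpow (by positivity) _ hρ.le
    have h1 : (ntv ℓ : ℝ) ≤ ((N - L + 1 : ℕ) : ℝ) := by
      have := entry_le hntvD ℓ
      exact_mod_cast (by omega : ntv ℓ ≤ N - L + 1)
    have h2 : (m : ℝ) ≤ (nv ℓ : ℝ) := by exact_mod_cast hmv ℓ
    have h3 : (0:ℝ) < (nv ℓ : ℝ) := by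
      have := hnv.1 ℓ; exact_mod_cast this
    exact div_le_div₀ (le_of_lt htop) h1 hmlt h2


theorem minimax_R0
    (L N : ℕ) (hL : 0 < L) (hLN : L ≤ N)
    (α : Fin L → ℝ) (hα : ∀ ℓ, 0 < α ℓ) (ρ : ℝ) (hρ : 0 < ρ) :
    IsLeast { v : ℝ | ∃ nv ∈ Delta L N, v = worst0 N α ρ nv }
      ((((N - L + 1 : ℕ) : ℝ) / ((N / L : ℕ) : ℝ)) ^ ρ) ∧
    (let nstar : Fin L → ℕ := fun ℓ => if (ℓ : ℕ) < N - L * (N / L) then N / L + 1 else N / L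
     nstar ∈ Delta L N ∧
      worst0 N α ρ nstar = (((N - L + 1 : ℕ) : ℝ) / ((N / L : ℕ) : ℝ)) ^ ρ) := by
  haveI : Nonempty (Fin L) := Fin.pos_iff_nonempty.mp hL
  set q : ℕ := N / L with hqdef
  set r : ℕ := N - L * q with hrdef
  have hq1 : 1 ≤ q := (Nat.one_le_div_iff hL).mpr hLN
  have hLq : L * q ≤ N := by rw [hqdef, mul_comm]; exact Nat.div_mul_le_self N L
  have hrmod : r = N % L := by
    rw [hrdef, hqdef]
    exact (Nat.eq_sub_of_add_eq (Nat.mod_add_div N L)).symm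
  have hrL : r < L := by rw [hrmod]; exact Nat.mod_lt N hL
  set nstar : Fin L → ℕ := fun ℓ => if (ℓ : ℕ) < r then q + 1 else q with hns
  have hnstarD : nstar ∈ Delta L N := by
    constructor
    · intro ℓ; by_cases h : (ℓ : ℕ) < r <;> simp [hns, h] <;> omega
    · have hcardf : (Finset.univ.filter (fun ℓ : Fin L => (ℓ : ℕ) < r)).card = r := by
        have heq : (Finset.univ.filter (fun ℓ : Fin L => (ℓ : ℕ) < r))
            = Finset.Iio (⟨r, hrL⟩ : Fin L) := by
          ext ℓ; simp [Fin.lt_def]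
        rw [heq, Fin.card_Iio]
      calc ∑ ℓ, nstar ℓ = ∑ ℓ : Fin L, (q + if (ℓ : ℕ) < r then 1 else 0) := by
            apply Finset.sum_congr rfl
            intro ℓ _
            by_cases h : (ℓ : ℕ) < r <;> simp [hns, h]
        _ = L * q + r := by
            rw [Finset.sum_add_distrib, Finset.sum_const, Finset.card_univ, Fintype.card_fin,
              smul_eq_mul, Finset.sum_ite, Finset.sum_const, Finset.sum_const, hcardf]
            simp
        _ = N := Nat.add_sub_cancel' hLq
  have hinf : Finset.univ.inf' Finset.univ_nonempty nstar = q := by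
    apply le_antisymm
    · have hlast : nstar ⟨L - 1, by omega⟩ = q := by
        have : ¬ ((L - 1 : ℕ) < r) := by omega
        simp [hns, this]
      calc Finset.univ.inf' Finset.univ_nonempty nstar ≤ nstar ⟨L - 1, by omega⟩ :=
            Finset.inf'_le nstar (Finset.mem_univ _)
        _ = q := hlast
    · apply Finset.le_inf'
      intro ℓ _
      by_cases h : (ℓ : ℕ) < r <;> simp [hns, h]
  have hworstar : worst0 N α ρ nstar = (((N - L + 1 : ℕ) : ℝ) / ((q : ℕ) : ℝ)) ^ ρ := by
    rw [worst0, (worst0_isGreatest hLN α hα hρ hnstarD).csSup_eq, hinf]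
  refine ⟨⟨⟨nstar, hnstarD, hworstar.symm⟩, ?_⟩, hnstarD, hworstar⟩
  rintro v ⟨nv, hnvD, rfl⟩
  rw [worst0, (worst0_isGreatest hLN α hα hρ hnvD).csSup_eq]
  set m : ℕ := Finset.univ.inf' Finset.univ_nonempty nv with hm
  have hm1 : 1 ≤ m := Finset.le_inf' _ _ (fun ℓ _ => hnvD.1 ℓ)
  have hmq : m ≤ q := by
    have hsum : Finset.univ.card • m ≤ ∑ ℓ, nv ℓ :=
      Finset.card_nsmul_le_sum _ _ _ (fun ℓ _ => Finset.inf'_le nv (Finset.mem_univ ℓ))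
    rw [Finset.card_univ, Fintype.card_fin, smul_eq_mul, hnvD.2] at hsum
    exact (Nat.le_div_iff_mul_le hL).mpr (by rw [mul_comm]; exact hsum)
  apply Real.rpow_le_rpow ?_ ?_ hρ.le
  · positivity
  · have h1 : (0:ℝ) < (m:ℝ) := by exact_mod_cast hm1
    have h2 : (m:ℝ) ≤ (q:ℝ) := by exact_mod_cast hmq
    have htop : (0:ℝ) ≤ ((N - L + 1 : ℕ) : ℝ) := by positivity
    gcongr
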